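/- Let G be a graph with ordering σ = (u₁,…,u_n,u_{n+1}) (u_{n+1} isolated), let P₁ = (P₀, u_x) be a normal path of G(i+1,j), and suppose uᵢ ∈ V(G(i,j)) and u_x ∈ N(uᵢ). Then P = (P₁, uᵢ) is a normal path of G(i,j). -/

import Mathlib

def UmbrellaFree {V : Type*} [LinearOrder V] (G : SimpleGraph V) : Prop :=
  ∀ x y z : V, x < y → y < z → G.Adj x z → G.Adj x y ∨ G.Adj y z

def LDFSOrdering {V : Type*} [LinearOrder V] (G : SimpleGraph V) : Prop :=
  ∀ a b c : V, a < b → b < c → G.Adj a c → ¬ G.Adj a b →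
    ∃ d : V, a < d ∧ d < b ∧ G.Adj d b ∧ ¬ G.Adj d c

/-- A (simple) path of `G`, as a list of distinct vertices with consecutive vertices
adjacent. -/
def IsPathList {V : Type*} (G : SimpleGraph V) (P : List V) : Prop :=
  P.Nodup ∧ P.Chain' G.Adj

/-- `P = (v₁, v₂, …)` is typical (w.r.t. the ordering σ given by the linear order on `V`):
`v₁` is the rightmost vertex of `V(P)` in σ, and `v₂` is the rightmost vertex of
`N(v₁) ∩ V(P)` in σ. -/
def TypicalPath {V : Type*} [LinearOrder V] (G : SimpleGraph V) : List V → Prop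
  | [] => True
  | [_] => True
  | v1 :: v2 :: rest =>
      (∀ v ∈ v1 :: v2 :: rest, v ≤ v1) ∧ (∀ v ∈ v2 :: rest, G.Adj v1 v → v ≤ v2)

/-- The "normality from each vertex on" condition: for any two consecutive vertices
`v_{i-1}, v_i` of the list, `v_i` is the rightmost vertex of
`N(v_{i-1}) ∩ {v_i, …, v_k}` in σ. -/
def NormalFrom {V : Type*} [LinearOrder V] (G : SimpleGraph V) : List V → Prop
  | [] => True
  | [_] => True
  | a :: b :: rest =>
      (∀ v ∈ b :: rest, G.Adj a v → v ≤ b) ∧ NormalFrom G (b :: rest)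

/-- `P` is a normal path of `G` (w.r.t. σ): a typical path such that each `v_i` is the
rightmost vertex of `N(v_{i-1}) ∩ {v_i, …, v_k}` in σ. -/
def NormalPath {V : Type*} [LinearOrder V] (G : SimpleGraph V) (P : List V) : Prop :=
  IsPathList G P ∧ (∀ h : P ≠ [], ∀ v ∈ P, v ≤ P.head h) ∧ NormalFrom G P

/-- The vertex set of `G(i,j)` (`0`-indexed), where `u_n` is the dummy isolated vertex. -/
def Gset {n : ℕ} (G : SimpleGraph (Fin (n + 1))) (i j : ℕ) : Set (Fin (n + 1)) :=
  {v | i ≤ (v : ℕ) ∧ (v : ℕ) ≤ j ∧ ∀ w : Fin (n + 1), (w : ℕ) = j + 1 → ¬ G.Adj v w}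

/-- `P` is a normal path of the induced subgraph on the vertex set `S` (adjacency among
vertices of `P` in the induced subgraph coincides with adjacency in `G`). -/
def NormalPathIn {V : Type*} [LinearOrder V] (G : SimpleGraph V) (S : Set V)
    (P : List V) : Prop :=
  (∀ v ∈ P, v ∈ S) ∧ NormalPath G P

lemma normalFrom_append {V : Type*} [LinearOrder V] (G : SimpleGraph V) (u : V) :
    ∀ L : List V, NormalFrom G L → (∀ v ∈ L, u ≤ v) → NormalFrom G (L ++ [u]) := by
  intro L
  induction L with
  | nil => intro _ _; trivial
  | cons a t ih =>
    cases t with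
    | nil =>
      intro _ _
      refine ⟨?_, trivial⟩
      intro v hv _
      simp at hv; subst hv; rfl
    | cons b r =>
      intro hN hle
      obtain ⟨h1, h2⟩ := hN
      refine ⟨?_, ih h2 (fun v hv => hle v (List.mem_cons_of_mem a hv))⟩
      intro v hv hadj
      rcases List.mem_append.mp (show v ∈ (b :: r) ++ [u] from hv) with h | h
      · exact h1 v h hadj
      · simp at h; subst h
        exact hle b (by simp)

/-- If `P₁ = (P₀, u_x)` is a normal path of `G(i+1,j)`, `uᵢ ∈ V(G(i,j))` and
`u_x ∈ N(uᵢ)`, then `P = (P₁, uᵢ)` is a normal path of `G(i,j)`. -/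
theorem normal_path_extend {n : ℕ} (G : SimpleGraph (Fin (n + 1)))
    (hdummy : ∀ w, ¬ G.Adj (Fin.last n) w)
    (hUF : UmbrellaFree G) (hLDFS : LDFSOrdering G)
    (i j : ℕ) (hi : i < n) (hj : j < n)
    (P₀ : List (Fin (n + 1))) (ux : Fin (n + 1))
    (hP₁ : NormalPathIn G (Gset G (i + 1) j) (P₀ ++ [ux]))
    (hui : (⟨i, by omega⟩ : Fin (n + 1)) ∈ Gset G i j)
    (hadj : G.Adj (⟨i, by omega⟩ : Fin (n + 1)) ux) :
    NormalPathIn G (Gset G i j) ((P₀ ++ [ux]) ++ [(⟨i, by omega⟩ : Fin (n + 1))]) := by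
  obtain ⟨hmem, ⟨hnodup, hchain⟩, hhead, hnorm⟩ := hP₁
  set ui : Fin (n+1) := ⟨i, by omega⟩ with hui_def
  have hlt : ∀ v ∈ P₀ ++ [ux], ui < v := by
    intro v hv
    have := (hmem v hv).1
    simp [Fin.lt_def, hui_def]; omega
  have hne : (P₀ ++ [ux]) ≠ [] := by simp
  refine ⟨?_, ⟨?_, ?_⟩, ?_, ?_⟩
  · intro v hv
    rcases List.mem_append.mp hv with h | h
    · obtain ⟨h1, h2, h3⟩ := hmem v h
      exact ⟨by omega, h2, h3⟩
    · simp at h; subst h; exact hui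
  · rw [List.nodup_append]
    refine ⟨hnodup, by simp, ?_⟩
    intro v hv b hb
    simp at hb; subst hb
    exact (hlt v hv).ne'
  · show List.IsChain G.Adj _
    rw [List.isChain_append]
    refine ⟨hchain, by simp, ?_⟩
    intro x hx y hy
    simp at hy; subst hy
    rw [List.getLast?_concat] at hx
    simp at hx; subst hx
    exact hadj.symm
  · intro _ v hv
    have hh : ((P₀ ++ [ux]) ++ [ui]).head (by simp) = (P₀ ++ [ux]).head hne := by
      rw [List.head_append_of_ne_nil]
    rw [hh]
    rcases List.mem_append.mp hv with h | h
    · exact hhead hne v h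
    · simp at h; subst h
      exact le_of_lt (hlt _ (List.head_mem hne))
  · exact normalFrom_append G ui _ hnorm (fun v hv => le_of_lt (hlt v hv))
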